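/- Any Lie algebra homomorphism ξ of e₀(2) (basis X₁,X₂,X₃, brackets [X₃,X₁]=X₂, [X₃,X₂]=−X₁) whose matrix has (3,3)-entry γ with γ²∉{0,1} and which does not annihilate span(X₁,X₂) fails to exist; precisely, every homomorphism ξ of e₀(2) has one of these forms in the basis (X₁,X₂,X₃): rows ((0,0,a),(0,0,b),(0,0,γ)); rows ((α,−β,a),(β,α,b),(0,0,1)); or rows ((α,β,a),(β,−α,b),(0,0,−1)). -/
import Mathlib


/-- The bracket of `e₀(2)`: `[X₃,X₁] = X₂`, `[X₃,X₂] = −X₁`. -/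
def brE (u v : Fin 3 → ℝ) : Fin 3 → ℝ :=
  ![u 1 * v 2 - u 2 * v 1, u 2 * v 0 - u 0 * v 2, 0]

/-- Every Lie algebra endomorphism of `e₀(2)` has in the basis `(X₁,X₂,X₃)` one of the
forms: rows `((0,0,a),(0,0,b),(0,0,γ))`; rows `((α,−β,a),(β,α,b),(0,0,1))`;
or rows `((α,β,a),(β,−α,b),(0,0,−1))`. -/
theorem e02_homomorphism_form
    (M : Matrix (Fin 3) (Fin 3) ℝ)
    (hM : ∀ u v, M.mulVec (brE u v) = brE (M.mulVec u) (M.mulVec v)) :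
    (∀ i, M i 0 = 0 ∧ M i 1 = 0) ∨
    (M 2 0 = 0 ∧ M 2 1 = 0 ∧ M 2 2 = 1 ∧ M 1 1 = M 0 0 ∧ M 1 0 = -M 0 1) ∨
    (M 2 0 = 0 ∧ M 2 1 = 0 ∧ M 2 2 = -1 ∧ M 1 1 = -M 0 0 ∧ M 1 0 = M 0 1) := by
  have h1 := hM ![0,0,1] ![1,0,0]
  have h2 := hM ![0,0,1] ![0,1,0]
  have e10 := congrFun h1 0
  have e11 := congrFun h1 1
  have e12 := congrFun h1 2
  have e20 := congrFun h2 0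
  have e21 := congrFun h2 1
  have e22 := congrFun h2 2
  simp [brE, Matrix.mulVec, dotProduct, Fin.sum_univ_three] at e10 e11 e12 e20 e21 e22
  -- e12 : M 2 1 = 0,  e22 : M 2 0 = 0
  simp only [e22, e12, mul_zero, zero_mul, sub_zero, zero_sub] at e10 e11 e20 e21
  -- e10 : M 0 1 = -(M 2 2 * M 1 0), e11 : M 1 1 = M 2 2 * M 0 0
  -- e20 : -M 0 0 = -(M 2 2 * M 1 1), e21 : -M 1 0 = M 2 2 * M 0 1
  by_cases h : M 0 0 = 0 ∧ M 1 0 = 0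
  · left
    intro i
    have h00 := h.1
    have h10 := h.2
    have h01 : M 0 1 = 0 := by rw [e10, h10, mul_zero, neg_zero]
    have h11 : M 1 1 = 0 := by rw [e11, h00, mul_zero]
    fin_cases i <;> exact ⟨by assumption, by assumption⟩
  · have hsq : (M 2 2 - 1) * (M 2 2 + 1) = 0 := by
      rcases not_and_or.mp h with h0 | h0
      · have key : M 0 0 * ((M 2 2 - 1) * (M 2 2 + 1)) = M 0 0 * 0 := by
          linear_combination e20 - M 2 2 * e11
        exact mul_left_cancel₀ h0 key
      · have key : M 1 0 * ((M 2 2 - 1) * (M 2 2 + 1)) = M 1 0 * 0 := by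
          linear_combination e21 + M 2 2 * e10
        exact mul_left_cancel₀ h0 key
    rcases mul_eq_zero.mp hsq with h' | h'
    · right; left
      have hg : M 2 2 = 1 := by linarith
      rw [hg] at e10 e11
      exact ⟨e22, e12, hg, by linarith, by linarith⟩
    · right; right
      have hg : M 2 2 = -1 := by linarith
      rw [hg] at e10 e11
      exact ⟨e22, e12, hg, by linarith, by linarith⟩
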